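/- Fix $\lambda_1 > \lambda_2$ and consider the $2\times 2$ Toda flow with initial angle $\theta_0$ uniformly distributed (or more generally, the deflation time as a function of $(\lambda_1,\lambda_2,\theta_0)$). For GOE-distributed $2\times 2$ matrices, the expected deflation time satisfies $\mu_{2,\epsilon,\mathrm{GOE}} = O(|\log\epsilon|)$ as $\epsilon \to 0$: specifically, there exists $C > 0$ such that $\int_{-\infty}^{\infty}\int_{-\infty}^{\lambda_1}\int_0^{\pi/2} \tau_\epsilon(\lambda_1,\lambda_2,\theta)\, e^{-(\lambda_1^2+\lambda_2^2)/4}(\lambda_1-\lambda_2)\, d\theta\, d\lambda_2\, d\lambda_1 \leq C|\log\epsilon|$ for all sufficiently small $\epsilon > 0$. -/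

import Mathlib

open Real Set MeasureTheory

set_option maxHeartbeats 1600000

private lemma aux_xexp (x : ℝ) : x * Real.exp (-(1/8) * x ^ 2) ≤ 2 := by
  rcases le_or_gt x 0 with hx | hx
  · nlinarith [Real.exp_pos (-(1/8) * x ^ 2),
      mul_nonpos_of_nonpos_of_nonneg hx (Real.exp_pos (-(1/8) * x ^ 2)).le]
  · have h1 : x ^ 2 / 8 + 1 ≤ Real.exp (x ^ 2 / 8) := Real.add_one_le_exp _
    have h2 : Real.exp (-(1/8) * x ^ 2) = (Real.exp (x ^ 2 / 8))⁻¹ := by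
      rw [← Real.exp_neg]; ring_nf
    rw [h2, ← div_eq_mul_inv, div_le_iff₀ (Real.exp_pos _)]
    nlinarith [sq_nonneg (x - 2)]

private lemma deflation_bound {ε Δ θ : ℝ} (hε : 0 < ε) (hΔ : 0 < Δ)
    (hθ1 : 0 < θ) (hθ2 : θ < π / 2) (hm : ε < Δ * Real.cos θ * Real.sin θ) :
    0 ≤ Real.log (Real.tan θ) -
        Real.log (Δ / (2 * ε) - Real.sqrt (Δ ^ 2 / (4 * ε ^ 2) - 1)) ∧
      Real.log (Real.tan θ) -
        Real.log (Δ / (2 * ε) - Real.sqrt (Δ ^ 2 / (4 * ε ^ 2) - 1)) ≤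
        2 * (Real.log Δ - Real.log ε) := by
  have hπ := Real.pi_pos
  set s := Δ / (2 * ε) with hs
  have hsθ : 0 < Real.sin θ := Real.sin_pos_of_pos_of_lt_pi hθ1 (by linarith)
  have hcθ : 0 < Real.cos θ := Real.cos_pos_of_mem_Ioo ⟨by linarith, hθ2⟩
  have hs1 : Real.sin θ ≤ 1 := Real.sin_le_one θ
  have hc1 : Real.cos θ ≤ 1 := Real.cos_le_one θ
  have hpyth : Real.sin θ ^ 2 + Real.cos θ ^ 2 = 1 := Real.sin_sq_add_cos_sq θ
  have hcs : Real.cos θ * Real.sin θ ≤ 1 / 2 := by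
    nlinarith [sq_nonneg (Real.sin θ - Real.cos θ)]
  have hΔε : 2 * ε < Δ := by nlinarith
  have hs_gt : 1 < s := (one_lt_div (by linarith)).2 hΔε
  have hΔs : Δ = 2 * ε * s := by rw [hs]; field_simp
  have hrw : Δ ^ 2 / (4 * ε ^ 2) - 1 = s ^ 2 - 1 := by rw [hs]; field_simp; ring
  rw [hrw]
  set w := Real.sqrt (s ^ 2 - 1) with hwdef
  have hw0 : 0 ≤ w := Real.sqrt_nonneg _
  have hw2 : w ^ 2 = s ^ 2 - 1 := Real.sq_sqrt (by nlinarith)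
  have hws : w < s := by
    rw [hwdef, Real.sqrt_lt' (by linarith)]; nlinarith
  have hr_pos : 0 < s - w := by linarith
  have hεΔ : ε / Δ ≤ s - w := by
    rw [div_le_iff₀ hΔ, hΔs]
    nlinarith [mul_nonneg hε.le (sq_nonneg (s - w))]
  set t := Real.tan θ with htdef
  have ht : t = Real.sin θ / Real.cos θ := Real.tan_eq_sin_div_cos θ
  have ht_pos : 0 < t := by rw [ht]; positivity
  have ht_le : t ≤ Δ / ε := by
    rw [ht, div_le_div_iff₀ hcθ hε]
    nlinarith
  have hst : Real.sin θ = t * Real.cos θ := by rw [ht]; field_simp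
  have hcsq : Real.cos θ ^ 2 * (1 + t ^ 2) = 1 := by
    rw [hst] at hpyth; linear_combination hpyth
  have step1 : 1 < 2 * s * t * Real.cos θ ^ 2 := by
    rw [hΔs, hst] at hm
    have h'' : ε * 1 < ε * (2 * s * t * Real.cos θ ^ 2) := by
      calc ε * 1 = ε := mul_one ε
        _ < 2 * ε * s * Real.cos θ * (t * Real.cos θ) := hm
        _ = ε * (2 * s * t * Real.cos θ ^ 2) := by ring
    exact (mul_lt_mul_iff_right₀ hε).1 h''
  have h2st : 1 + t ^ 2 < 2 * s * t := by
    have hpos : (0:ℝ) < 1 + t ^ 2 := by positivity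
    calc 1 + t ^ 2 = 1 * (1 + t ^ 2) := by ring
      _ < 2 * s * t * Real.cos θ ^ 2 * (1 + t ^ 2) := by
          exact (mul_lt_mul_iff_left₀ hpos).2 step1
      _ = 2 * s * t * (Real.cos θ ^ 2 * (1 + t ^ 2)) := by ring
      _ = 2 * s * t := by rw [hcsq]; ring
  have ht_ge : s - w ≤ t := by
    by_contra hcon
    push_neg at hcon
    have hprod : 0 < (s - w - t) * (s + w - t) :=
      mul_pos (by linarith) (by linarith)
    have hexp : (s - w - t) * (s + w - t) = t ^ 2 - 2 * s * t + 1 := by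
      linear_combination -hw2
    linarith [hprod, hexp.symm ▸ hprod]
  have hlog_t : Real.log t ≤ Real.log Δ - Real.log ε := by
    have h := Real.log_le_log ht_pos ht_le
    rwa [Real.log_div (ne_of_gt hΔ) (ne_of_gt hε)] at h
  have hlog_r : Real.log ε - Real.log Δ ≤ Real.log (s - w) := by
    have h := Real.log_le_log (div_pos hε hΔ) hεΔ
    rwa [Real.log_div (ne_of_gt hε) (ne_of_gt hΔ)] at h
  have hlog_rt : Real.log (s - w) ≤ Real.log t := Real.log_le_log hr_pos ht_ge
  exact ⟨by linarith, by linarith⟩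

private noncomputable def gbd (L : ℝ) (p : ℝ × ℝ × ℝ) : ℝ :=
  (10 * L * Real.exp (-(1/8) * p.1 ^ 2)) *
    (Real.exp (-(1/8) * p.2.1 ^ 2) *
      Set.indicator (Set.Ioo 0 (π / 2)) (fun _ => (1:ℝ)) p.2.2)

private lemma gbd_nonneg {L : ℝ} (hL : 0 ≤ L) (p : ℝ × ℝ × ℝ) : 0 ≤ gbd L p := by
  unfold gbd
  have h := Set.indicator_nonneg (s := Set.Ioo 0 (π / 2))
    (f := fun _ : ℝ => (1:ℝ)) (fun _ _ => by norm_num) p.2.2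
  positivity

private lemma ind_integrable :
    Integrable (Set.indicator (Set.Ioo 0 (π / 2)) (fun _ => (1:ℝ))) := by
  rw [integrable_indicator_iff measurableSet_Ioo]
  exact integrableOn_const measure_Ioo_lt_top.ne

private lemma gbd_integrable (L : ℝ) : Integrable (gbd L) := by
  have hf1 : Integrable (fun x : ℝ => 10 * L * Real.exp (-(1/8) * x ^ 2)) :=
    (integrable_exp_neg_mul_sq (by norm_num)).const_mul _
  have hf2 : Integrable (fun x : ℝ => Real.exp (-(1/8) * x ^ 2)) :=
    integrable_exp_neg_mul_sq (by norm_num)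
  have hf23 : Integrable (fun q : ℝ × ℝ =>
      Real.exp (-(1/8) * q.1 ^ 2) *
        Set.indicator (Set.Ioo 0 (π / 2)) (fun _ => (1:ℝ)) q.2) := by
    exact hf2.mul_prod ind_integrable
  exact hf1.mul_prod hf23

private lemma gbd_integral (L : ℝ) : ∫ p : ℝ × ℝ × ℝ, gbd L p = 40 * π ^ 2 * L := by
  have h1 : (∫ p : ℝ × ℝ × ℝ, gbd L p) =
      (∫ x : ℝ, 10 * L * Real.exp (-(1/8) * x ^ 2)) *
        ∫ q : ℝ × ℝ, Real.exp (-(1/8) * q.1 ^ 2) *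
          Set.indicator (Set.Ioo 0 (π / 2)) (fun _ => (1:ℝ)) q.2 := by
    have h := integral_prod_mul (μ := (volume : Measure ℝ)) (ν := (volume : Measure (ℝ × ℝ)))
      (fun x : ℝ => 10 * L * Real.exp (-(1/8) * x ^ 2))
      (fun q : ℝ × ℝ => Real.exp (-(1/8) * q.1 ^ 2) *
        Set.indicator (Set.Ioo 0 (π / 2)) (fun _ => (1:ℝ)) q.2)
    rw [← Measure.volume_eq_prod] at h
    exact h
  have h2 : (∫ q : ℝ × ℝ, Real.exp (-(1/8) * q.1 ^ 2) *
      Set.indicator (Set.Ioo 0 (π / 2)) (fun _ => (1:ℝ)) q.2) =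
      (∫ x : ℝ, Real.exp (-(1/8) * x ^ 2)) *
        ∫ y : ℝ, Set.indicator (Set.Ioo 0 (π / 2)) (fun _ => (1:ℝ)) y := by
    have h := integral_prod_mul (μ := (volume : Measure ℝ)) (ν := (volume : Measure ℝ))
      (fun x : ℝ => Real.exp (-(1/8) * x ^ 2))
      (Set.indicator (Set.Ioo 0 (π / 2)) (fun _ => (1:ℝ)))
    rw [← Measure.volume_eq_prod] at h
    exact h
  have hgauss : (∫ x : ℝ, Real.exp (-(1/8) * x ^ 2)) = Real.sqrt (8 * π) := by
    rw [integral_gaussian (1/8)]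
    congr 1
    ring
  have hind : (∫ y : ℝ, Set.indicator (Set.Ioo 0 (π / 2)) (fun _ => (1:ℝ)) y)
      = π / 2 := by
    rw [integral_indicator_const (1:ℝ) measurableSet_Ioo]
    simp [Real.volume_Ioo, ENNReal.toReal_ofReal (by positivity : (0:ℝ) ≤ π / 2)]
    positivity
  have hconst : (∫ x : ℝ, 10 * L * Real.exp (-(1/8) * x ^ 2)) =
      10 * L * Real.sqrt (8 * π) := by
    rw [integral_const_mul, hgauss]
  rw [h1, h2, hgauss, hind, hconst]
  have h8 : Real.sqrt (8 * π) * Real.sqrt (8 * π) = 8 * π :=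
    Real.mul_self_sqrt (by positivity)
  calc 10 * L * Real.sqrt (8 * π) * (Real.sqrt (8 * π) * (π / 2))
      = Real.sqrt (8 * π) * Real.sqrt (8 * π) * (10 * L * (π / 2)) := by ring
    _ = 8 * π * (10 * L * (π / 2)) := by rw [h8]
    _ = 40 * π ^ 2 * L := by ring

/-- The expected deflation time of the 2×2 Toda flow over GOE initial data is
`O(|log ε|)` as `ε → 0`. -/
theorem goe_2x2_mean_deflation_time_log_bound
    (m₁₂ : ℝ × ℝ × ℝ → ℝ)
    (hm : ∀ p : ℝ × ℝ × ℝ, m₁₂ p = (p.1 - p.2.1) * Real.cos p.2.2 * Real.sin p.2.2)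
    (τ : ℝ → ℝ × ℝ × ℝ → ℝ)
    (hτ₀ : ∀ ε > (0 : ℝ), ∀ p : ℝ × ℝ × ℝ, m₁₂ p ≤ ε → τ ε p = 0)
    (hτ₁ : ∀ ε > (0 : ℝ), ∀ p : ℝ × ℝ × ℝ, ε < m₁₂ p →
      (p.1 - p.2.1) * τ ε p =
        Real.log (Real.tan p.2.2) -
          Real.log ((p.1 - p.2.1) / (2 * ε) -
            Real.sqrt ((p.1 - p.2.1) ^ 2 / (4 * ε ^ 2) - 1))) :
    ∃ C > (0 : ℝ), ∃ ε₀ > (0 : ℝ), ∀ ε ∈ Set.Ioo (0 : ℝ) ε₀,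
      ∫ p in {p : ℝ × ℝ × ℝ | p.2.1 < p.1 ∧ p.2.2 ∈ Ioo 0 (π / 2)},
          τ ε p * Real.exp (-(p.1 ^ 2 + p.2.1 ^ 2) / 4) * (p.1 - p.2.1) ∂volume
        ≤ C * |Real.log ε| := by
  have hπ := Real.pi_pos
  refine ⟨40 * π ^ 2, by positivity, Real.exp (-4), Real.exp_pos _, ?_⟩
  rintro ε ⟨hε, hε4⟩
  set L : ℝ := |Real.log ε| with hLdef
  have hlogε : Real.log ε < -4 := by
    have := Real.log_lt_log hε hε4
    rwa [Real.log_exp] at this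
  have hLeq : L = -Real.log ε := abs_of_neg (by linarith)
  have hL4 : 4 ≤ L := by rw [hLeq]; linarith
  have hL0 : 0 ≤ L := by linarith
  set S : Set (ℝ × ℝ × ℝ) := {p : ℝ × ℝ × ℝ | p.2.1 < p.1 ∧ p.2.2 ∈ Ioo 0 (π / 2)}
    with hSdef
  have hS : MeasurableSet S := by
    have : S = {p : ℝ × ℝ × ℝ | p.2.1 < p.1} ∩
        ((fun p : ℝ × ℝ × ℝ => p.2.2) ⁻¹' Ioo 0 (π / 2)) := rfl
    rw [this]
    exact (measurableSet_lt (measurable_snd.fst) measurable_fst).inter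
      (measurableSet_Ioo.preimage (measurable_snd.snd))
  -- pointwise bounds on S
  have hbound : ∀ p ∈ S,
      0 ≤ τ ε p * Real.exp (-(p.1 ^ 2 + p.2.1 ^ 2) / 4) * (p.1 - p.2.1) ∧
      τ ε p * Real.exp (-(p.1 ^ 2 + p.2.1 ^ 2) / 4) * (p.1 - p.2.1) ≤ gbd L p := by
    rintro p ⟨hp1, hp2⟩
    have hΔ : 0 < p.1 - p.2.1 := by simpa using sub_pos.2 hp1
    set e1 : ℝ := Real.exp (-(1/8) * p.1 ^ 2) with he1def
    set e2 : ℝ := Real.exp (-(1/8) * p.2.1 ^ 2) with he2def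
    have he1 : 0 < e1 := Real.exp_pos _
    have he2 : 0 < e2 := Real.exp_pos _
    have hgp : gbd L p = 10 * L * e1 * (e2 * 1) := by
      unfold gbd
      rw [Set.indicator_of_mem hp2]
    set E : ℝ := Real.exp (-(p.1 ^ 2 + p.2.1 ^ 2) / 4) with hEdef
    have hE : 0 < E := Real.exp_pos _
    have hEeq : E = (e1 * e2) * (e1 * e2) := by
      rw [he1def, he2def, hEdef]
      simp only [← Real.exp_add]
      congr 1
      ring
    rcases le_or_gt (m₁₂ p) ε with hcase | hcase
    · rw [hτ₀ ε hε p hcase]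
      constructor
      · simp
      · simpa using gbd_nonneg hL0 p
    · have hmp : ε < (p.1 - p.2.1) * Real.cos p.2.2 * Real.sin p.2.2 := by
        rw [← hm p]; exact hcase
      obtain ⟨hlo, hhi⟩ := deflation_bound hε hΔ hp2.1 hp2.2 hmp
      have hτeq := hτ₁ ε hε p hcase
      have hτlo : 0 ≤ (p.1 - p.2.1) * τ ε p := by rw [hτeq]; exact hlo
      have hτhi : (p.1 - p.2.1) * τ ε p ≤ 2 * (Real.log (p.1 - p.2.1) + L) := by
        rw [hτeq, hLeq]; linarith
      have hFeq : τ ε p * E * (p.1 - p.2.1) = ((p.1 - p.2.1) * τ ε p) * E := by ring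
      constructor
      · rw [hFeq]; exact mul_nonneg hτlo hE.le
      · rw [hFeq, hgp]
        have hlogΔ : Real.log (p.1 - p.2.1) ≤ p.1 - p.2.1 :=
          (Real.log_le_sub_one_of_pos hΔ).trans (by linarith)
        have he1le : e1 ≤ 1 := Real.exp_le_one_iff.2 (by nlinarith [sq_nonneg p.1])
        have he2le : e2 ≤ 1 := Real.exp_le_one_iff.2 (by nlinarith [sq_nonneg p.2.1])
        have hx1 := aux_xexp p.1
        have hx2 := aux_xexp (-p.2.1)
        rw [show (-p.2.1) ^ 2 = p.2.1 ^ 2 by ring] at hx2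
        have hΔe : (p.1 - p.2.1) * (e1 * e2) ≤ 4 := by
          rw [← he1def] at hx1
          rw [← he2def] at hx2
          nlinarith [mul_le_mul_of_nonneg_right hx1 he2.le,
            mul_le_mul_of_nonneg_right hx2 he1.le, he1.le, he2.le, he1le, he2le]
        have hEle : E ≤ e1 * e2 := by
          rw [hEeq]
          have h12le : e1 * e2 ≤ 1 := mul_le_one₀ he1le he2.le he2le
          nlinarith [mul_pos he1 he2, h12le]
        calc ((p.1 - p.2.1) * τ ε p) * E
            ≤ (2 * (Real.log (p.1 - p.2.1) + L)) * E :=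
              mul_le_mul_of_nonneg_right hτhi hE.le
          _ ≤ (2 * ((p.1 - p.2.1) + L)) * E := by
              apply mul_le_mul_of_nonneg_right _ hE.le
              linarith
          _ = 2 * (p.1 - p.2.1) * E + 2 * L * E := by ring
          _ ≤ 8 * (e1 * e2) + 2 * L * (e1 * e2) := by
              have hA : 2 * (p.1 - p.2.1) * E ≤ 8 * (e1 * e2) := by
                rw [hEeq]
                nlinarith [mul_pos he1 he2, hΔe]
              have hB : 2 * L * E ≤ 2 * L * (e1 * e2) :=
                mul_le_mul_of_nonneg_left hEle (by linarith)
              linarith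
          _ ≤ 10 * L * (e1 * e2) := by
              nlinarith [mul_pos he1 he2]
          _ = 10 * L * e1 * (e2 * 1) := by ring
  have hInt : Integrable (gbd L) (volume.restrict S) := (gbd_integrable L).restrict
  calc (∫ p in S,
        τ ε p * Real.exp (-(p.1 ^ 2 + p.2.1 ^ 2) / 4) * (p.1 - p.2.1) ∂volume)
      ≤ ∫ p in S, gbd L p ∂volume := by
        apply integral_mono_of_nonneg
        · exact (ae_restrict_iff' hS).2 (ae_of_all _ fun p hp => (hbound p hp).1)
        · exact hInt
        · exact (ae_restrict_iff' hS).2 (ae_of_all _ fun p hp => (hbound p hp).2)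
    _ ≤ ∫ p, gbd L p := setIntegral_le_integral (gbd_integrable L)
        (ae_of_all _ fun p => gbd_nonneg hL0 p)
    _ = 40 * π ^ 2 * L := gbd_integral L
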